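/- Let 1 ≤ ℓ < k ≤ n/2 and set s = ½ [n−1 choose k−1]_q^{1/2} [n−1 choose ℓ−1]_q^{1/2}. For i = 2,…,ℓ one has s · (s − θ_i^{k,k} a(0)) > (θ_i^{k,ℓ} b(0))²; equivalently, the 2×2 matrix with diagonal entries s − θ_i^{k,k} a(0) and s, and off-diagonal entries −θ_i^{k,ℓ} b(0), has strictly positive determinant. -/

import Mathlib

open Finset


/-- The Gaussian binomial coefficient `[a choose b]_q`, as a real number:
`∏_{i=0}^{b-1} (q^(a-i)-1)/(q^(b-i)-1)` for `a, b ≥ 0`, and `0` if `a < 0` or `b < 0`. -/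
noncomputable def gbinom (q : ℝ) (a b : ℤ) : ℝ :=
  if 0 ≤ a ∧ 0 ≤ b then
    ∏ i ∈ Finset.range b.toNat, (q ^ (a - i) - 1) / (q ^ (b - i) - 1)
  else 0

/-- The eigenvalue
`θ_i^{k,ℓ} = (-1)^i q^{C(i,2) + kℓ - i(k+ℓ)/2} [n-k-i choose ℓ-i] [n-2i choose k-i]^{1/2}
[n-2i choose ℓ-i]^{-1/2}` for `i ≤ k ≤ n - i`, and `0` if `k < i` or `k > n - i`.
(The half-integer power of `q` is expressed via `√q`.) -/
noncomputable def theta (q : ℝ) (n i k l : ℕ) : ℝ :=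
  if i ≤ k ∧ k ≤ n - i then
    (-1) ^ i * (Real.sqrt q) ^ ((i * (i - 1) : ℤ) + 2 * k * l - i * (k + l)) *
      gbinom q ((n : ℤ) - k - i) ((l : ℤ) - i) *
      Real.sqrt (gbinom q ((n : ℤ) - 2 * i) ((k : ℤ) - i)) *
      (Real.sqrt (gbinom q ((n : ℤ) - 2 * i) ((l : ℤ) - i)))⁻¹
  else 0

/-- `a(λ)`, defined by
`q^{k²}(q^k-1)[n-k choose k] a(λ) = ½ q^ℓ (q^{k-ℓ}-1)[n-1 choose k-1]^{1/2}[n-1 choose ℓ-1]^{1/2}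
+ q^{ℓ²}(q^ℓ-1)[n-ℓ choose ℓ] λ`. -/
noncomputable def aF (q : ℝ) (n k l : ℕ) (lam : ℝ) : ℝ :=
  ((1 / 2) * q ^ l * (q ^ ((k : ℤ) - l) - 1) *
      Real.sqrt (gbinom q ((n : ℤ) - 1) ((k : ℤ) - 1)) *
      Real.sqrt (gbinom q ((n : ℤ) - 1) ((l : ℤ) - 1)) +
    q ^ (l ^ 2) * (q ^ l - 1) * gbinom q ((n : ℤ) - l) l * lam) /
  (q ^ (k ^ 2) * (q ^ k - 1) * gbinom q ((n : ℤ) - k) k)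

/-- `b(λ)`, defined by
`q^{kℓ}[n-k choose ℓ] b(λ) = -½ q^ℓ [n-1 choose ℓ]
- q^{ℓ²}[n-ℓ choose ℓ][n-1 choose ℓ-1]^{1/2}[n-1 choose k-1]^{-1/2} λ`. -/
noncomputable def bF (q : ℝ) (n k l : ℕ) (lam : ℝ) : ℝ :=
  (-(1 / 2) * q ^ l * gbinom q ((n : ℤ) - 1) l -
    q ^ (l ^ 2) * gbinom q ((n : ℤ) - l) l *
      Real.sqrt (gbinom q ((n : ℤ) - 1) ((l : ℤ) - 1)) *
      (Real.sqrt (gbinom q ((n : ℤ) - 1) ((k : ℤ) - 1)))⁻¹ * lam) /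
  (q ^ (k * l) * gbinom q ((n : ℤ) - k) l)



noncomputable def Pf (q : ℝ) (m : ℕ) : ℝ := ∏ t ∈ Finset.range m, (q ^ (t+1) - 1)

def Aex (x y : ℕ) : ℕ := ∑ t ∈ Finset.Ico x y, (t+1)

lemma one_le_factor {q : ℝ} (hq : 2 ≤ q) (t : ℕ) : (1:ℝ) ≤ q ^ (t+1) - 1 := by
  have : (2:ℝ) ≤ q ^ (t+1) := le_trans hq (le_self_pow₀ (by linarith) (Nat.succ_ne_zero t))
  linarith

lemma one_le_Pf {q : ℝ} (hq : 2 ≤ q) (m : ℕ) : (1:ℝ) ≤ Pf q m := by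
  rw [Pf]
  calc (1:ℝ) = ∏ _t ∈ Finset.range m, 1 := by simp
  _ ≤ ∏ t ∈ Finset.range m, (q ^ (t+1) - 1) :=
      Finset.prod_le_prod (by intros; norm_num) (fun t _ => one_le_factor hq t)

lemma Pf_pos {q : ℝ} (hq : 2 ≤ q) (m : ℕ) : 0 < Pf q m :=
  lt_of_lt_of_le one_pos (one_le_Pf hq m)

lemma Pf_split (q : ℝ) {x y : ℕ} (h : x ≤ y) :
    Pf q y = Pf q x * ∏ t ∈ Finset.Ico x y, (q ^ (t+1) - 1) := by
  rw [Pf, Pf, Finset.range_eq_Ico, Finset.range_eq_Ico]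
  exact (Finset.prod_Ico_consecutive (fun t => q ^ (t+1) - 1) (Nat.zero_le x) h).symm

lemma weier (s : Finset ℕ) (f : ℕ → ℝ) (h0 : ∀ t ∈ s, 0 ≤ f t) (h1 : ∀ t ∈ s, f t ≤ 1) :
    1 - ∑ t ∈ s, f t ≤ ∏ t ∈ s, (1 - f t) := by
  induction s using Finset.cons_induction with
  | empty => simp
  | cons a s ha ih =>
    rw [Finset.prod_cons, Finset.sum_cons]
    have hfa0 := h0 a (Finset.mem_cons_self a s)
    have hfa1 := h1 a (Finset.mem_cons_self a s)
    have ihs := ih (fun t ht => h0 t (Finset.mem_cons_of_mem ht))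
      (fun t ht => h1 t (Finset.mem_cons_of_mem ht))
    have hsum : (0:ℝ) ≤ ∑ t ∈ s, f t :=
      Finset.sum_nonneg (fun t ht => h0 t (Finset.mem_cons_of_mem ht))
    nlinarith

lemma geom_aux {q : ℝ} (hq : 2 ≤ q) {x y : ℕ} (h : x ≤ y) :
    ∑ t ∈ Finset.Ico x y, (q⁻¹) ^ (t+1) ≤ (q⁻¹) ^ x - (q⁻¹) ^ y := by
  have hqpos : (0:ℝ) < q := by linarith
  have hu : q⁻¹ ≤ 1/2 := by
    rw [inv_le_comm₀ hqpos (by norm_num)]; linarith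
  have hu0 : (0:ℝ) ≤ q⁻¹ := by positivity
  induction y, h using Nat.le_induction with
  | base => simp
  | succ y hxy ih =>
    rw [Finset.sum_Ico_succ_top hxy]
    have h1 : (q⁻¹) ^ (y+1) = (q⁻¹) ^ y * q⁻¹ := by ring
    have h2 : (0:ℝ) ≤ (q⁻¹) ^ y := by positivity
    nlinarith

lemma prod_Ico_le {q : ℝ} (hq : 2 ≤ q) {x y : ℕ} (h : x ≤ y) :
    ∏ t ∈ Finset.Ico x y, (q ^ (t+1) - 1) ≤ q ^ (Aex x y) := by
  rw [Aex, ← Finset.prod_pow_eq_pow_sum]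
  refine Finset.prod_le_prod (fun t _ => ?_) (fun t _ => ?_)
  · have := one_le_factor hq t; linarith
  · have : (0:ℝ) ≤ q ^ (t+1) := by positivity
    linarith

lemma prod_Ico_ge {q : ℝ} (hq : 2 ≤ q) {x y : ℕ} (h : x ≤ y) :
    (1 - (q⁻¹) ^ x) * q ^ (Aex x y) ≤ ∏ t ∈ Finset.Ico x y, (q ^ (t+1) - 1) := by
  have hqpos : (0:ℝ) < q := by linarith
  have hu : q⁻¹ ≤ 1/2 := by rw [inv_le_comm₀ hqpos (by norm_num)]; linarith
  have hu0 : (0:ℝ) ≤ q⁻¹ := by positivity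
  have hfac : ∀ t : ℕ, q ^ (t+1) - 1 = q ^ (t+1) * (1 - (q⁻¹) ^ (t+1)) := by
    intro t
    have : (q⁻¹) ^ (t+1) * q ^ (t+1) = 1 := by
      rw [← mul_pow]; simp [inv_mul_cancel₀ (ne_of_gt hqpos)]
    nlinarith [this]
  calc (1 - (q⁻¹) ^ x) * q ^ (Aex x y)
      ≤ (∏ t ∈ Finset.Ico x y, (1 - (q⁻¹) ^ (t+1))) * q ^ (Aex x y) := by
        refine mul_le_mul_of_nonneg_right ?_ (by positivity)
        have h1 : 1 - ((q⁻¹) ^ x - (q⁻¹) ^ y) ≤ 1 - ∑ t ∈ Finset.Ico x y, (q⁻¹) ^ (t+1) := by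
          have := geom_aux hq h; linarith
        have h2 := weier (Finset.Ico x y) (fun t => (q⁻¹) ^ (t+1))
          (fun t _ => by positivity)
          (fun t _ => by
            calc (q⁻¹) ^ (t+1) ≤ (1/2 : ℝ) ^ (t+1) := pow_le_pow_left₀ hu0 hu _
            _ ≤ 1 := by
                apply pow_le_one₀ <;> norm_num)
        have h3 : (0:ℝ) ≤ (q⁻¹) ^ y := by positivity
        calc 1 - (q⁻¹) ^ x ≤ 1 - ((q⁻¹) ^ x - (q⁻¹) ^ y) := by linarith
        _ ≤ 1 - ∑ t ∈ Finset.Ico x y, (q⁻¹) ^ (t+1) := h1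
        _ ≤ _ := h2
  _ = ∏ t ∈ Finset.Ico x y, (q ^ (t+1) - 1) := by
        rw [Aex, ← Finset.prod_pow_eq_pow_sum, ← Finset.prod_mul_distrib]
        exact Finset.prod_congr rfl (fun t _ => by rw [hfac t]; ring)

/-- Upper pair bound: `Pf y ≤ Pf x * q^(Aex x y)`. -/
lemma Pf_le_mul_pow {q : ℝ} (hq : 2 ≤ q) {x y : ℕ} (h : x ≤ y) :
    Pf q y ≤ Pf q x * q ^ (Aex x y) := by
  rw [Pf_split q h]
  exact mul_le_mul_of_nonneg_left (prod_Ico_le hq h) (le_of_lt (Pf_pos hq x))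

/-- Lower pair bound with constant 2 (valid for `1 ≤ x`). -/
lemma Pf_pair_one {q : ℝ} (hq : 2 ≤ q) {x y : ℕ} (hx : 1 ≤ x) (h : x ≤ y) :
    Pf q x * q ^ (Aex x y) ≤ 2 * Pf q y := by
  have hqpos : (0:ℝ) < q := by linarith
  have hu : q⁻¹ ≤ 1/2 := by rw [inv_le_comm₀ hqpos (by norm_num)]; linarith
  have hu0 : (0:ℝ) ≤ q⁻¹ := by positivity
  have hx2 : (q⁻¹) ^ x ≤ 1/2 := by
    calc (q⁻¹) ^ x ≤ (q⁻¹) ^ 1 := pow_le_pow_of_le_one hu0 (by linarith) hx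
    _ = q⁻¹ := pow_one _
    _ ≤ 1/2 := hu
  have hge := prod_Ico_ge hq h
  have hsplit := Pf_split q h
  have hPfx := Pf_pos hq x
  have hApos : (0:ℝ) < q ^ (Aex x y) := pow_pos hqpos _
  calc Pf q x * q ^ (Aex x y)
      ≤ Pf q x * q ^ (Aex x y) * (2 * (1 - (q⁻¹) ^ x)) := by nlinarith [mul_pos hPfx hApos]
  _ = 2 * (Pf q x * ((1 - (q⁻¹) ^ x) * q ^ (Aex x y))) := by ring
  _ ≤ 2 * (Pf q x * ∏ t ∈ Finset.Ico x y, (q ^ (t+1) - 1)) := by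
      have := mul_le_mul_of_nonneg_left hge (le_of_lt hPfx); linarith
  _ = 2 * Pf q y := by rw [← Pf_split q h]

/-- Lower pair bound with constant 4/3 (valid for `2 ≤ x`). -/
lemma Pf_pair_two {q : ℝ} (hq : 2 ≤ q) {x y : ℕ} (hx : 2 ≤ x) (h : x ≤ y) :
    Pf q x * q ^ (Aex x y) ≤ (4/3) * Pf q y := by
  have hqpos : (0:ℝ) < q := by linarith
  have hu : q⁻¹ ≤ 1/2 := by rw [inv_le_comm₀ hqpos (by norm_num)]; linarith
  have hu0 : (0:ℝ) ≤ q⁻¹ := by positivity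
  have hx2 : (q⁻¹) ^ x ≤ 1/4 := by
    calc (q⁻¹) ^ x ≤ (q⁻¹) ^ 2 := pow_le_pow_of_le_one hu0 (by linarith) hx
    _ ≤ (1/2 : ℝ)^2 := pow_le_pow_left₀ hu0 hu 2
    _ = 1/4 := by norm_num
  have hge := prod_Ico_ge hq h
  have hsplit := Pf_split q h
  have hPfx := Pf_pos hq x
  have hApos : (0:ℝ) < q ^ (Aex x y) := pow_pos hqpos _
  calc Pf q x * q ^ (Aex x y)
      ≤ Pf q x * q ^ (Aex x y) * ((4/3) * (1 - (q⁻¹) ^ x)) := by nlinarith [mul_pos hPfx hApos]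
  _ = (4/3) * (Pf q x * ((1 - (q⁻¹) ^ x) * q ^ (Aex x y))) := by ring
  _ ≤ (4/3) * (Pf q x * ∏ t ∈ Finset.Ico x y, (q ^ (t+1) - 1)) := by
      have := mul_le_mul_of_nonneg_left hge (le_of_lt hPfx); linarith
  _ = (4/3) * Pf q y := by rw [← Pf_split q h]

/-- Closed form for the exponent sums. -/
lemma Aex_eq {x y : ℕ} (h : x ≤ y) :
    2 * (Aex x y : ℤ) = (y : ℤ) * (y + 1) - (x : ℤ) * (x + 1) := by
  induction y, h using Nat.le_induction with
  | base => simp [Aex]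
  | succ y hxy ih =>
    rw [Aex, Finset.sum_Ico_succ_top hxy, ← Aex]
    push_cast
    push_cast at ih
    linarith

lemma Pf_succ (q : ℝ) (m : ℕ) : Pf q (m+1) = Pf q m * (q ^ (m+1) - 1) := by
  rw [Pf, Pf, Finset.prod_range_succ]

lemma prod_top {q : ℝ} (hq : 2 ≤ q) (a : ℕ) :
    ∀ b : ℕ, b ≤ a →
      ∏ i ∈ Finset.range b, (q ^ ((a : ℤ) - (i : ℕ)) - 1) = Pf q a / Pf q (a - b) := by
  intro b
  induction b with
  | zero => intro _; simp [div_self (ne_of_gt (Pf_pos hq a))]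
  | succ b ih =>
    intro hb1
    have hb : b ≤ a := by omega
    rw [Finset.prod_range_succ, ih hb]
    have he : ((a : ℤ) - (b : ℕ)) = ((a - b : ℕ) : ℤ) := by
      push_cast; omega
    rw [he, zpow_natCast]
    have hab : a - b = (a - (b+1)) + 1 := by omega
    have h2 : q ^ (a - b) - 1 ≠ 0 := by
      rw [hab]
      have := one_le_factor hq (a - (b+1)); linarith
    have hPf : Pf q (a-b) = Pf q (a-(b+1)) * (q ^ (a-b) - 1) := by
      rw [hab, Pf_succ, ← hab]
    rw [hPf, ← div_div, div_mul_cancel₀ _ h2]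

lemma gbinom_eq {q : ℝ} (hq : 2 ≤ q) (a b c : ℕ) (h : b + c = a) :
    gbinom q (a : ℤ) (b : ℤ) = Pf q a / (Pf q b * Pf q c) := by
  rw [gbinom, if_pos ⟨Int.natCast_nonneg a, Int.natCast_nonneg b⟩]
  rw [Int.toNat_natCast, Finset.prod_div_distrib]
  rw [prod_top hq a b (by omega), prod_top hq b b le_rfl]
  have h0 : Pf q 0 = 1 := by simp [Pf]
  have hc : a - b = c := by omega
  rw [Nat.sub_self, h0, hc, div_one]
  rw [div_div, mul_comm]

lemma gbinom_pos {q : ℝ} (hq : 2 ≤ q) (a b c : ℕ) (h : b + c = a) :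
    0 < gbinom q (a : ℤ) (b : ℤ) := by
  rw [gbinom_eq hq a b c h]
  exact div_pos (Pf_pos hq a) (mul_pos (Pf_pos hq b) (Pf_pos hq c))

lemma pow_budget {q : ℝ} (hq : 2 ≤ q) {e1 e2 : ℕ} (h : e1 + 5 ≤ e2) {c C : ℝ}
    (hc : 0 ≤ c) (hC : c ≤ 32 * C) :
    c * q ^ e1 ≤ C * q ^ e2 := by
  have hq0 : (0:ℝ) < q := by linarith
  have h32 : (32:ℝ) ≤ q ^ 5 := by
    calc (32:ℝ) = 2 ^ 5 := by norm_num
    _ ≤ q ^ 5 := pow_le_pow_left₀ (by norm_num) hq 5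
  have he : q ^ e1 * 32 ≤ q ^ e2 := by
    calc q ^ e1 * 32 ≤ q ^ e1 * q ^ 5 := by nlinarith [pow_pos hq0 e1]
    _ = q ^ (e1+5) := (pow_add q e1 5).symm
    _ ≤ q ^ e2 := pow_le_pow_right₀ (by linarith) h
  have hC0 : (0:ℝ) ≤ c/32 := by linarith
  have k1 := mul_le_mul_of_nonneg_left he hC0
  have k2 := mul_le_mul_of_nonneg_right (show c/32 ≤ C by linarith)
    (le_of_lt (pow_pos hq0 e2))
  nlinarith

lemma K1 {q : ℝ} (hq : 2 ≤ q) (n k i j : ℕ)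
    (hi : 2 ≤ i) (hik : i < k) (hkn : 2*k ≤ n) (hj : 2*j = i*(i-1)) :
    q ^ (k*k + j) * (Pf q (n-k-i) * Pf q k)
      ≤ (1/16) * (q ^ (k*k + i*k) * (Pf q (k-i) * Pf q (n-k))) := by
  have hq0 : (0:ℝ) < q := by linarith
  set A1 := Aex (n-k-i) (n-k) with hA1def
  set A2 := Aex (k-i) k with hA2def
  have b1 : Pf q (n-k-i) * q ^ A1 ≤ 2 * Pf q (n-k) :=
    Pf_pair_one hq (by omega) (by omega)
  have b2 : Pf q k ≤ Pf q (k-i) * q ^ A2 := Pf_le_mul_pow hq (by omega)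
  have hA1 : 2*(A1:ℤ) = ((n:ℤ)-k)*((n:ℤ)-k+1) - ((n:ℤ)-k-i)*((n:ℤ)-k-i+1) := by
    rw [hA1def, Aex_eq (by omega)]
    have e1 : ((n-k-i:ℕ):ℤ) = (n:ℤ)-k-i := by omega
    have e2 : ((n-k:ℕ):ℤ) = (n:ℤ)-k := by omega
    rw [e1, e2]
  have hA2 : 2*(A2:ℤ) = (k:ℤ)*((k:ℤ)+1) - ((k:ℤ)-i)*((k:ℤ)-i+1) := by
    rw [hA2def, Aex_eq (by omega)]
    have e1 : ((k-i:ℕ):ℤ) = (k:ℤ)-i := by omega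
    rw [e1]
  have hexp : (k*k + j + A2) + 5 ≤ (k*k + i*k) + A1 := by
    zify
    have hj' : 2*(j:ℤ) = (i:ℤ)*((i:ℤ)-1) := by
      have : (i:ℤ)*((i:ℤ)-1) = ((i*(i-1) : ℕ) : ℤ) := by
        push_cast [Nat.cast_sub (by omega : 1 ≤ i)]; ring
      omega
    have hh2 : (i:ℤ)+1 ≤ (n:ℤ)-k := by omega
    have hh1 : (2:ℤ) ≤ i := by exact_mod_cast hi
    nlinarith [mul_le_mul_of_nonneg_left hh2 (by linarith : (0:ℤ) ≤ 2*(i:ℤ))]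
  have hq1 : 0 < q ^ A1 := pow_pos hq0 _
  have hPf1 := Pf_pos hq (k-i)
  have hPf2 := Pf_pos hq (n-k)
  have hPfk := Pf_pos hq k
  rw [← mul_le_mul_iff_left₀ hq1]
  calc q ^ (k*k + j) * (Pf q (n-k-i) * Pf q k) * q ^ A1
      = q ^ (k*k + j) * ((Pf q (n-k-i) * q ^ A1) * Pf q k) := by ring
    _ ≤ q ^ (k*k + j) * ((2 * Pf q (n-k)) * (Pf q (k-i) * q ^ A2)) := by
        apply mul_le_mul_of_nonneg_left _ (le_of_lt (pow_pos hq0 _))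
        exact mul_le_mul b1 b2 (le_of_lt hPfk) (by nlinarith)
    _ = (2 * q ^ (k*k + j + A2)) * (Pf q (k-i) * Pf q (n-k)) := by
        rw [pow_add]; ring
    _ ≤ ((1/16) * q ^ (k*k + i*k + A1)) * (Pf q (k-i) * Pf q (n-k)) := by
        refine mul_le_mul_of_nonneg_right ?_ (le_of_lt (mul_pos hPf1 hPf2))
        exact pow_budget hq hexp (by norm_num) (by norm_num)
    _ = (1/16) * (q ^ (k*k + i*k) * (Pf q (k-i) * Pf q (n-k))) * q ^ A1 := by
        rw [pow_add]; ring

lemma K2 {q : ℝ} (hq : 2 ≤ q) (n k l i M : ℕ)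
    (hi : 2 ≤ i) (hil : i ≤ l) (hlk : l < k) (hkn : 2*k ≤ n)
    (hM : (M:ℤ) = (i:ℤ)*((i:ℤ)-1) + 2*(k:ℤ)*(l:ℤ) - (i:ℤ)*((k:ℤ)+(l:ℤ))) :
    q ^ (M + 2*l) * (Pf q (n-k-i) * Pf q (n-k-i) * Pf q (k-1) * Pf q (l-1)
        * Pf q (n-l) * Pf q (n-i-l))
      ≤ (1/12) * (q ^ (2*(k*l)) * (Pf q (n-k) * Pf q (l-i) * Pf q (k-i)
        * Pf q (n-i-k) * (Pf q (n-1-l) * Pf q (n-1-l)))) := by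
  have hq0 : (0:ℝ) < q := by linarith
  set A1 := Aex (n-k-i) (n-k) with hA1def
  set A2 := Aex (k-i) (k-1) with hA2def
  set A3 := Aex (l-i) (l-1) with hA3def
  set A4 := Aex (n-i-l) (n-1-l) with hA4def
  set A5 := Aex (n-1-l) (n-l) with hA5def
  have b1 : Pf q (n-k-i) * q ^ A1 ≤ 2 * Pf q (n-k) :=
    Pf_pair_one hq (by omega) (by omega)
  have b2 : Pf q (k-1) ≤ Pf q (k-i) * q ^ A2 := Pf_le_mul_pow hq (by omega)
  have b3 : Pf q (l-1) ≤ Pf q (l-i) * q ^ A3 := Pf_le_mul_pow hq (by omega)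
  have b4 : Pf q (n-i-l) * q ^ A4 ≤ (4/3) * Pf q (n-1-l) :=
    Pf_pair_two hq (by omega) (by omega)
  have b5 : Pf q (n-l) ≤ Pf q (n-1-l) * q ^ A5 := Pf_le_mul_pow hq (by omega)
  have b6 : Pf q (n-k-i) = Pf q (n-i-k) := by rw [show n-k-i = n-i-k by omega]
  have hA1 : 2*(A1:ℤ) = ((n:ℤ)-k)*((n:ℤ)-k+1) - ((n:ℤ)-k-i)*((n:ℤ)-k-i+1) := by
    rw [hA1def, Aex_eq (by omega)]
    rw [show ((n-k-i:ℕ):ℤ) = (n:ℤ)-k-i by omega, show ((n-k:ℕ):ℤ) = (n:ℤ)-k by omega]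
  have hA2 : 2*(A2:ℤ) = ((k:ℤ)-1)*(k:ℤ) - ((k:ℤ)-i)*((k:ℤ)-i+1) := by
    rw [hA2def, Aex_eq (by omega)]
    rw [show ((k-i:ℕ):ℤ) = (k:ℤ)-i by omega, show ((k-1:ℕ):ℤ) = (k:ℤ)-1 by omega]
    ring
  have hA3 : 2*(A3:ℤ) = ((l:ℤ)-1)*(l:ℤ) - ((l:ℤ)-i)*((l:ℤ)-i+1) := by
    rw [hA3def, Aex_eq (by omega)]
    rw [show ((l-i:ℕ):ℤ) = (l:ℤ)-i by omega, show ((l-1:ℕ):ℤ) = (l:ℤ)-1 by omega]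
    ring
  have hA4 : 2*(A4:ℤ) = ((n:ℤ)-1-l)*((n:ℤ)-l) - ((n:ℤ)-i-l)*((n:ℤ)-i-l+1) := by
    rw [hA4def, Aex_eq (by omega)]
    rw [show ((n-i-l:ℕ):ℤ) = (n:ℤ)-i-l by omega, show ((n-1-l:ℕ):ℤ) = (n:ℤ)-1-l by omega]
    ring
  have hA5 : 2*(A5:ℤ) = ((n:ℤ)-l)*((n:ℤ)-l+1) - ((n:ℤ)-1-l)*((n:ℤ)-l) := by
    rw [hA5def, Aex_eq (by omega)]
    rw [show ((n-1-l:ℕ):ℤ) = (n:ℤ)-1-l by omega, show ((n-l:ℕ):ℤ) = (n:ℤ)-l by omega]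
    ring
  have hexp : (M + 2*l + A2 + A3 + A5) + 5 ≤ 2*(k*l) + A1 + A4 := by
    zify
    have hh1 : (1:ℤ) ≤ (i:ℤ)-1 := by
      have : (2:ℤ) ≤ i := by exact_mod_cast hi
      omega
    have hh2 : (5:ℤ) ≤ 2*(n:ℤ)-i-k-l := by omega
    nlinarith [mul_le_mul hh1 hh2 (by norm_num) (by linarith)]
  have hq1 : 0 < q ^ (A1 + A4) := pow_pos hq0 _
  have p1 := Pf_pos hq (n-k); have p2 := Pf_pos hq (l-i); have p3 := Pf_pos hq (k-i)
  have p4 := Pf_pos hq (n-i-k); have p5 := Pf_pos hq (n-1-l)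
  have p6 := Pf_pos hq (n-k-i); have p7 := Pf_pos hq (k-1); have p8 := Pf_pos hq (l-1)
  have p9 := Pf_pos hq (n-l); have p10 := Pf_pos hq (n-i-l)
  rw [← mul_le_mul_iff_left₀ hq1]
  calc q ^ (M + 2*l) * (Pf q (n-k-i) * Pf q (n-k-i) * Pf q (k-1) * Pf q (l-1)
        * Pf q (n-l) * Pf q (n-i-l)) * q ^ (A1 + A4)
      = q ^ (M + 2*l) * ((Pf q (n-k-i) * q ^ A1) * Pf q (n-i-k) * Pf q (k-1)
        * Pf q (l-1) * Pf q (n-l) * (Pf q (n-i-l) * q ^ A4)) := by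
        rw [b6, pow_add]; ring
    _ ≤ q ^ (M + 2*l) * ((2 * Pf q (n-k)) * Pf q (n-i-k) * (Pf q (k-i) * q ^ A2)
        * (Pf q (l-i) * q ^ A3) * (Pf q (n-1-l) * q ^ A5) * ((4/3) * Pf q (n-1-l))) := by
        refine mul_le_mul_of_nonneg_left ?_ (le_of_lt (pow_pos hq0 _))
        have q2 := pow_pos hq0 A2; have q3 := pow_pos hq0 A3; have q5 := pow_pos hq0 A5
        have m1 : Pf q (n-k-i) * q ^ A1 * Pf q (n-i-k) ≤ (2 * Pf q (n-k)) * Pf q (n-i-k) :=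
          mul_le_mul_of_nonneg_right b1 (le_of_lt p4)
        gcongr
    _ = ((8/3) * q ^ (M + 2*l + A2 + A3 + A5)) * (Pf q (n-k) * Pf q (l-i) * Pf q (k-i)
        * Pf q (n-i-k) * (Pf q (n-1-l) * Pf q (n-1-l))) := by
        rw [pow_add, pow_add, pow_add]; ring
    _ ≤ ((1/12) * q ^ (2*(k*l) + A1 + A4)) * (Pf q (n-k) * Pf q (l-i) * Pf q (k-i)
        * Pf q (n-i-k) * (Pf q (n-1-l) * Pf q (n-1-l))) := by
        refine mul_le_mul_of_nonneg_right ?_ ?_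
        · exact pow_budget hq hexp (by norm_num) (by norm_num)
        · exact le_of_lt (mul_pos (mul_pos (mul_pos (mul_pos p1 p2) p3) p4) (mul_pos p5 p5))
    _ = (1/12) * (q ^ (2*(k*l)) * (Pf q (n-k) * Pf q (l-i) * Pf q (k-i)
        * Pf q (n-i-k) * (Pf q (n-1-l) * Pf q (n-1-l)))) * q ^ (A1 + A4) := by
        rw [pow_add, pow_add]; ring

lemma sqrt_zpow_even {Q : ℝ} (hQ : 2 ≤ Q) (a b : ℕ) :
    (Real.sqrt Q) ^ (2*(a:ℤ) - 2*(b:ℤ)) = Q ^ a / Q ^ b := by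
  have hQ0 : (0:ℝ) < Q := by linarith
  have hs : Real.sqrt Q ^ (2:ℤ) = Q := by
    rw [zpow_two]; exact Real.mul_self_sqrt (le_of_lt hQ0)
  rw [show 2*(a:ℤ) - 2*(b:ℤ) = 2 * ((a:ℤ) - (b:ℤ)) by ring, zpow_mul, hs,
    zpow_sub₀ (ne_of_gt hQ0), zpow_natCast, zpow_natCast]

lemma sqrt_zpow_sq {Q : ℝ} (hQ : 2 ≤ Q) (M : ℕ) :
    ((Real.sqrt Q) ^ (M:ℤ))^2 = Q ^ M := by
  rw [zpow_natCast, ← pow_mul, mul_comm M 2, pow_mul, Real.sq_sqrt (by linarith)]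

set_option maxHeartbeats 2000000 in
/-- **Positivity of the determinant of `S_i(0)` (key inequality of Section 4).**
For `1 ≤ ℓ < k ≤ n/2`, with `s = ½[n-1 choose k-1]^{1/2}[n-1 choose ℓ-1]^{1/2}`, one has
`s(s - θ_i^{k,k} a(0)) > (θ_i^{k,ℓ} b(0))²` for `i = 2, …, ℓ`; equivalently, the `2 × 2`
matrix with diagonal `s - θ_i^{k,k} a(0)`, `s` and off-diagonal entries `-θ_i^{k,ℓ} b(0)`
has strictly positive determinant. -/
theorem det_Si_zero_pos
    (q n k l : ℕ) (hq : IsPrimePow q)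
    (hl1 : 1 ≤ l) (hlk : l < k) (hkn : 2 * k ≤ n)
    (i : ℕ) (hi2 : 2 ≤ i) (hil : i ≤ l) :
    ((1 / 2) * Real.sqrt (gbinom (q : ℝ) ((n : ℤ) - 1) ((k : ℤ) - 1)) *
        Real.sqrt (gbinom (q : ℝ) ((n : ℤ) - 1) ((l : ℤ) - 1))) *
      ((1 / 2) * Real.sqrt (gbinom (q : ℝ) ((n : ℤ) - 1) ((k : ℤ) - 1)) *
          Real.sqrt (gbinom (q : ℝ) ((n : ℤ) - 1) ((l : ℤ) - 1)) -
        theta (q : ℝ) n i k k * aF (q : ℝ) n k l 0) >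
      (theta (q : ℝ) n i k l * bF (q : ℝ) n k l 0) ^ 2 := by
  have hq2 : (2:ℝ) ≤ (q:ℝ) := by exact_mod_cast hq.two_le
  set Q : ℝ := (q:ℝ) with hQdef
  have hQ0 : (0:ℝ) < Q := by linarith
  -- numeric facts
  have hi1 : 1 ≤ i := by omega
  have hl2 : 2 ≤ l := by omega
  have hik : i < k := by omega
  have hkin : k + i ≤ n := by omega
  -- parity of i*(i-1)
  have hev := Nat.even_mul_succ_self (i-1)
  rw [show (i-1)+1 = i by omega] at hev
  obtain ⟨j, hj⟩ := hev
  have hj2 : i*(i-1) = 2*j := by rw [mul_comm i (i-1)]; omega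
  have hj3 : (i:ℤ)*((i:ℤ)-1) = 2*(j:ℤ) := by
    have := congrArg (Nat.cast : ℕ → ℤ) hj2
    push_cast [Nat.cast_sub hi1] at this
    linarith
  -- the exponent M
  have hiklm : i*(k+l) ≤ i*(i-1) + 2*(k*l) := by
    nlinarith [Nat.mul_le_mul_right k hil, Nat.mul_le_mul_right l (Nat.le_of_lt hlk)]
  set M : ℕ := i*(i-1) + 2*(k*l) - i*(k+l) with hMdef
  have hMeq : (M:ℤ) = (i:ℤ)*((i:ℤ)-1) + 2*(k:ℤ)*(l:ℤ) - (i:ℤ)*((k:ℤ)+(l:ℤ)) := by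
    rw [hMdef]
    push_cast [Nat.cast_sub hiklm, Nat.cast_sub hi1]
    ring
  -- gbinom values in Pf form
  have hGkk1 : gbinom Q ((n:ℤ)-1) ((k:ℤ)-1) = Pf Q (n-1) / (Pf Q (k-1) * Pf Q (n-k)) := by
    rw [show ((n:ℤ)-1) = ((n-1:ℕ):ℤ) by omega, show ((k:ℤ)-1) = ((k-1:ℕ):ℤ) by omega]
    exact gbinom_eq hq2 _ _ _ (by omega)
  have hGll1 : gbinom Q ((n:ℤ)-1) ((l:ℤ)-1) = Pf Q (n-1) / (Pf Q (l-1) * Pf Q (n-l)) := by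
    rw [show ((n:ℤ)-1) = ((n-1:ℕ):ℤ) by omega, show ((l:ℤ)-1) = ((l-1:ℕ):ℤ) by omega]
    exact gbinom_eq hq2 _ _ _ (by omega)
  have hG3 : gbinom Q ((n:ℤ)-1) (l:ℤ) = Pf Q (n-1) / (Pf Q l * Pf Q (n-1-l)) := by
    rw [show ((n:ℤ)-1) = ((n-1:ℕ):ℤ) by omega]
    exact gbinom_eq hq2 _ _ _ (by omega)
  have hG4 : gbinom Q ((n:ℤ)-k) (k:ℤ) = Pf Q (n-k) / (Pf Q k * Pf Q (n-2*k)) := by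
    rw [show ((n:ℤ)-k) = ((n-k:ℕ):ℤ) by omega]
    exact gbinom_eq hq2 _ _ _ (by omega)
  have hG5 : gbinom Q ((n:ℤ)-k) (l:ℤ) = Pf Q (n-k) / (Pf Q l * Pf Q (n-k-l)) := by
    rw [show ((n:ℤ)-k) = ((n-k:ℕ):ℤ) by omega]
    exact gbinom_eq hq2 _ _ _ (by omega)
  have hG7 : gbinom Q ((n:ℤ)-k-i) ((k:ℤ)-i) = Pf Q (n-k-i) / (Pf Q (k-i) * Pf Q (n-2*k)) := by
    rw [show ((n:ℤ)-k-i) = ((n-k-i:ℕ):ℤ) by omega, show ((k:ℤ)-i) = ((k-i:ℕ):ℤ) by omega]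
    exact gbinom_eq hq2 _ _ _ (by omega)
  have hG8 : gbinom Q ((n:ℤ)-k-i) ((l:ℤ)-i) = Pf Q (n-k-i) / (Pf Q (l-i) * Pf Q (n-k-l)) := by
    rw [show ((n:ℤ)-k-i) = ((n-k-i:ℕ):ℤ) by omega, show ((l:ℤ)-i) = ((l-i:ℕ):ℤ) by omega]
    exact gbinom_eq hq2 _ _ _ (by omega)
  have hG9 : gbinom Q ((n:ℤ)-2*i) ((k:ℤ)-i) = Pf Q (n-2*i) / (Pf Q (k-i) * Pf Q (n-i-k)) := by
    rw [show ((n:ℤ)-2*i) = ((n-2*i:ℕ):ℤ) by omega, show ((k:ℤ)-i) = ((k-i:ℕ):ℤ) by omega]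
    exact gbinom_eq hq2 _ _ _ (by omega)
  have hG10 : gbinom Q ((n:ℤ)-2*i) ((l:ℤ)-i) = Pf Q (n-2*i) / (Pf Q (l-i) * Pf Q (n-i-l)) := by
    rw [show ((n:ℤ)-2*i) = ((n-2*i:ℕ):ℤ) by omega, show ((l:ℤ)-i) = ((l-i:ℕ):ℤ) by omega]
    exact gbinom_eq hq2 _ _ _ (by omega)
  -- positivity of Pf pieces
  have pn1 := Pf_pos hq2 (n-1); have pk1 := Pf_pos hq2 (k-1); have pnk := Pf_pos hq2 (n-k)
  have pl1 := Pf_pos hq2 (l-1); have pnl := Pf_pos hq2 (n-l); have pl := Pf_pos hq2 l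
  have pn1l := Pf_pos hq2 (n-1-l); have pk := Pf_pos hq2 k; have pn2k := Pf_pos hq2 (n-2*k)
  have pnkl := Pf_pos hq2 (n-k-l); have pnki := Pf_pos hq2 (n-k-i); have pki := Pf_pos hq2 (k-i)
  have pli := Pf_pos hq2 (l-i); have pn2i := Pf_pos hq2 (n-2*i); have pnik := Pf_pos hq2 (n-i-k)
  have pnil := Pf_pos hq2 (n-i-l)
  -- u and v
  set u : ℝ := Real.sqrt (gbinom Q ((n:ℤ)-1) ((k:ℤ)-1)) with hudef
  set v : ℝ := Real.sqrt (gbinom Q ((n:ℤ)-1) ((l:ℤ)-1)) with hvdef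
  have hGkk1pos : 0 < gbinom Q ((n:ℤ)-1) ((k:ℤ)-1) := by
    rw [hGkk1]; exact div_pos pn1 (mul_pos pk1 pnk)
  have hGll1pos : 0 < gbinom Q ((n:ℤ)-1) ((l:ℤ)-1) := by
    rw [hGll1]; exact div_pos pn1 (mul_pos pl1 pnl)
  have hu0 : 0 < u := Real.sqrt_pos.mpr hGkk1pos
  have hv0 : 0 < v := Real.sqrt_pos.mpr hGll1pos
  have hu2 : u*u = Pf Q (n-1) / (Pf Q (k-1) * Pf Q (n-k)) := by
    rw [hudef, Real.mul_self_sqrt (le_of_lt hGkk1pos), hGkk1]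
  have hv2 : v*v = Pf Q (n-1) / (Pf Q (l-1) * Pf Q (n-l)) := by
    rw [hvdef, Real.mul_self_sqrt (le_of_lt hGll1pos), hGll1]
  -- G9 sqrt nonzero
  have hG9pos : 0 < gbinom Q ((n:ℤ)-2*i) ((k:ℤ)-i) := by
    rw [hG9]; exact div_pos pn2i (mul_pos pki pnik)
  have hG10pos : 0 < gbinom Q ((n:ℤ)-2*i) ((l:ℤ)-i) := by
    rw [hG10]; exact div_pos pn2i (mul_pos pli pnil)
  -- theta for (k,k)
  have hcond : i ≤ k ∧ k ≤ n - i := ⟨by omega, by omega⟩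
  have hθkk : theta Q n i k k
      = (-1)^i * (Q^(k*k+j) / Q^(i*k)) * gbinom Q ((n:ℤ)-k-i) ((k:ℤ)-i) := by
    rw [theta, if_pos hcond]
    rw [show ((i * (i - 1) : ℤ) + 2 * (k:ℕ) * (k:ℕ) - (i:ℕ) * ((k:ℕ) + (k:ℕ)))
        = 2*((k*k+j:ℕ):ℤ) - 2*((i*k:ℕ):ℤ) by push_cast; linarith [hj3]]
    rw [sqrt_zpow_even hq2]
    rw [mul_assoc, mul_inv_cancel₀ (ne_of_gt (Real.sqrt_pos.mpr hG9pos)), mul_one]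
  -- theta for (k,l)
  have hθkl : theta Q n i k l
      = (-1)^i * (Real.sqrt Q)^((M:ℕ):ℤ) * gbinom Q ((n:ℤ)-k-i) ((l:ℤ)-i) *
        Real.sqrt (gbinom Q ((n:ℤ)-2*i) ((k:ℤ)-i)) *
        (Real.sqrt (gbinom Q ((n:ℤ)-2*i) ((l:ℤ)-i)))⁻¹ := by
    rw [theta, if_pos hcond]
    rw [show ((i * (i - 1) : ℤ) + 2 * (k:ℕ) * (l:ℕ) - (i:ℕ) * ((k:ℕ) + (l:ℕ)))
        = ((M:ℕ):ℤ) by rw [hMeq]]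
  -- aF and bF at lambda = 0
  have haF0 : aF Q n k l 0 = ((1/2) * Q^l * (Q^((k:ℤ)-(l:ℤ)) - 1) * u * v)
      / (Q^(k^2) * (Q^k - 1) * gbinom Q ((n:ℤ)-(k:ℕ)) (k:ℤ)) := by
    rw [aF, mul_zero, add_zero, hudef, hvdef]
  have hbF0 : bF Q n k l 0 = (-(1/2) * Q^l * gbinom Q ((n:ℤ)-1) (l:ℤ))
      / (Q^(k*l) * gbinom Q ((n:ℤ)-(k:ℕ)) (l:ℤ)) := by
    rw [bF, mul_zero, sub_zero]
  -- elementary power facts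
  have hQk2 : (2:ℝ) ≤ Q^k := le_trans hq2 (le_self_pow₀ (by linarith) (by omega))
  have hQk1pos : (0:ℝ) < Q^k - 1 := by linarith
  have hklcast : Q^((k:ℤ)-(l:ℤ)) = Q^(k-l:ℕ) := by
    rw [show (k:ℤ)-(l:ℤ) = ((k-l:ℕ):ℤ) by omega, zpow_natCast]
  have hklpos : (0:ℝ) ≤ Q^((k:ℤ)-(l:ℤ)) - 1 := by
    rw [hklcast]
    have : (2:ℝ) ≤ Q^(k-l:ℕ) := le_trans hq2 (le_self_pow₀ (by linarith) (by omega))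
    linarith
  have hql : Q^l * (Q^((k:ℤ)-(l:ℤ)) - 1) ≤ Q^k - 1 := by
    rw [hklcast]
    have h1 : Q^l * Q^(k-l:ℕ) = Q^k := by rw [← pow_add]; congr 1; omega
    have h2 : (1:ℝ) ≤ Q^l := one_le_pow₀ (by linarith)
    have h3 : Q^l * (Q^(k-l:ℕ) - 1) = Q^k - Q^l := by rw [mul_sub, h1, mul_one]
    rw [h3]
    linarith only [h2]
  -- the T1 term
  have hC1eq : theta Q n i k k * aF Q n k l 0
      = (-1)^i * (((Q^(k*k+j) * (Pf Q (n-k-i) * Pf Q k) * ((1/2) * Q^l * (Q^((k:ℤ)-(l:ℤ)) - 1)) * Pf Q (n-2*k)) / ((Q^(i*k) * Q^(k^2) * (Q^k - 1)) * ((Pf Q (k-i) * Pf Q (n-k)) * Pf Q (n-2*k)))) * (u*v)) := by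
    rw [hθkk, haF0, hG7, hG4]
    have ne1 : Pf Q (k-i) ≠ 0 := ne_of_gt pki
    have ne2 : Pf Q (n-2*k) ≠ 0 := ne_of_gt pn2k
    have ne3 : Pf Q k ≠ 0 := ne_of_gt pk
    have ne4 : Pf Q (n-k) ≠ 0 := ne_of_gt pnk
    have ne5 : Q ≠ 0 := ne_of_gt hQ0
    have ne6 : Q^k - 1 ≠ 0 := ne_of_gt hQk1pos
    field_simp
  -- bound the R1 ratio
  have hDEN1pos : (0:ℝ) < ((Q^(i*k) * Q^(k^2) * (Q^k - 1)) * ((Pf Q (k-i) * Pf Q (n-k)) * Pf Q (n-2*k))) :=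
    mul_pos (mul_pos (mul_pos (pow_pos hQ0 _) (pow_pos hQ0 _)) hQk1pos)
      (mul_pos (mul_pos pki pnk) pn2k)
  have hNUM1nn : (0:ℝ) ≤ (Q^(k*k+j) * (Pf Q (n-k-i) * Pf Q k) * ((1/2) * Q^l * (Q^((k:ℤ)-(l:ℤ)) - 1)) * Pf Q (n-2*k)) := by
    have c1 : (0:ℝ) ≤ (1/2) * Q^l * (Q^((k:ℤ)-(l:ℤ)) - 1) := by
      have : (0:ℝ) ≤ Q^l := le_of_lt (pow_pos hQ0 _)
      have h12 : (0:ℝ) ≤ (1/2) * Q^l := by linarith only [this]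
      exact mul_nonneg h12 hklpos
    exact mul_nonneg (mul_nonneg (mul_nonneg (le_of_lt (pow_pos hQ0 _))
      (le_of_lt (mul_pos pnki pk))) c1) (le_of_lt pn2k)
  have hR1le : (Q^(k*k+j) * (Pf Q (n-k-i) * Pf Q k) * ((1/2) * Q^l * (Q^((k:ℤ)-(l:ℤ)) - 1)) * Pf Q (n-2*k)) / ((Q^(i*k) * Q^(k^2) * (Q^k - 1)) * ((Pf Q (k-i) * Pf Q (n-k)) * Pf Q (n-2*k))) ≤ 1/16 := by
    rw [div_le_iff₀ hDEN1pos]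
    have step1 : (1/2) * Q^l * (Q^((k:ℤ)-(l:ℤ)) - 1) * Pf Q (n-2*k) ≤ (Q^k - 1) * Pf Q (n-2*k) := by
      refine mul_le_mul_of_nonneg_right ?_ (le_of_lt pn2k)
      have h0 : (0:ℝ) ≤ Q^l * (Q^((k:ℤ)-(l:ℤ)) - 1) :=
        mul_nonneg (le_of_lt (pow_pos hQ0 _)) hklpos
      calc (1/2) * Q^l * (Q^((k:ℤ)-(l:ℤ)) - 1) = (1/2) * (Q^l * (Q^((k:ℤ)-(l:ℤ)) - 1)) := by ring
      _ ≤ Q^l * (Q^((k:ℤ)-(l:ℤ)) - 1) := by linarith only [h0]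
      _ ≤ Q^k - 1 := hql
    have hK1 := K1 hq2 n k i j hi2 hik hkn hj2.symm
    calc (Q^(k*k+j) * (Pf Q (n-k-i) * Pf Q k) * ((1/2) * Q^l * (Q^((k:ℤ)-(l:ℤ)) - 1)) * Pf Q (n-2*k))
        = (Q^(k*k+j) * (Pf Q (n-k-i) * Pf Q k)) * ((1/2) * Q^l * (Q^((k:ℤ)-(l:ℤ)) - 1) * Pf Q (n-2*k)) := by
          ring
      _ ≤ ((1/16) * (Q^(k*k+i*k) * (Pf Q (k-i) * Pf Q (n-k)))) * ((Q^k - 1) * Pf Q (n-2*k)) := by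
          refine mul_le_mul hK1 step1 ?_ ?_
          · have hh : (0:ℝ) ≤ (1/2) * Q^l := by
              have := le_of_lt (pow_pos hQ0 l); linarith only [this]
            exact mul_nonneg (mul_nonneg hh hklpos) (le_of_lt pn2k)
          · have hh := mul_pos (pow_pos hQ0 (k*k+i*k)) (mul_pos pki pnk)
            linarith only [hh]
      _ = 1/16 * ((Q^(i*k) * Q^(k^2) * (Q^k - 1)) * ((Pf Q (k-i) * Pf Q (n-k)) * Pf Q (n-2*k))) := by
          rw [show k*k+i*k = i*k+k^2 by ring, pow_add]; ring
  have hR1nn : (0:ℝ) ≤ (Q^(k*k+j) * (Pf Q (n-k-i) * Pf Q k) * ((1/2) * Q^l * (Q^((k:ℤ)-(l:ℤ)) - 1)) * Pf Q (n-2*k)) / ((Q^(i*k) * Q^(k^2) * (Q^k - 1)) * ((Pf Q (k-i) * Pf Q (n-k)) * Pf Q (n-2*k))) := div_nonneg hNUM1nn (le_of_lt hDEN1pos)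
  -- square of theta (k,l)
  have hθkl2 : (theta Q n i k l)^2
      = Q^M * (gbinom Q ((n:ℤ)-(k:ℕ)-(i:ℕ)) ((l:ℤ)-(i:ℕ)))^2 * gbinom Q ((n:ℤ)-2*(i:ℕ)) ((k:ℤ)-(i:ℕ))
        * (gbinom Q ((n:ℤ)-2*(i:ℕ)) ((l:ℤ)-(i:ℕ)))⁻¹ := by
    rw [hθkl, mul_pow, mul_pow, mul_pow, mul_pow, inv_pow, sqrt_zpow_sq hq2,
      Real.sq_sqrt (le_of_lt hG9pos), Real.sq_sqrt (le_of_lt hG10pos)]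
    rw [show (((-1:ℝ))^i)^2 = 1 by rw [← pow_mul, mul_comm i 2, pow_mul]; norm_num]
    ring
  -- T2 as an explicit ratio of Pf products
  have hT2eq : (theta Q n i k l * bF Q n k l 0)^2 = (Q^(M+2*l) * (1/4) * (Pf Q (n-k-i) * Pf Q (n-k-i)) * Pf Q (n-2*i) * (Pf Q (l-i) * Pf Q (n-i-l)) * (Pf Q (n-1) * Pf Q (n-1)) * (Pf Q l * Pf Q l) * (Pf Q (n-k-l) * Pf Q (n-k-l))) / ((Pf Q (l-i) * Pf Q (l-i)) * (Pf Q (n-k-l) * Pf Q (n-k-l)) * (Pf Q (k-i) * Pf Q (n-i-k)) * Pf Q (n-2*i) * Q^(2*(k*l)) * (Pf Q l * Pf Q l) * (Pf Q (n-1-l) * Pf Q (n-1-l)) * (Pf Q (n-k) * Pf Q (n-k))) := by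
    rw [mul_pow, hθkl2, hbF0, div_pow, hG8, hG3, hG5, hG9, hG10]
    have ne1 : Pf Q (l-i) ≠ 0 := ne_of_gt pli
    have ne2 : Pf Q (n-k-l) ≠ 0 := ne_of_gt pnkl
    have ne3 : Pf Q (n-2*i) ≠ 0 := ne_of_gt pn2i
    have ne4 : Pf Q l ≠ 0 := ne_of_gt pl
    have ne5 : Pf Q (n-1-l) ≠ 0 := ne_of_gt pn1l
    have ne6 : Pf Q (n-k) ≠ 0 := ne_of_gt pnk
    have ne7 : Q ≠ 0 := ne_of_gt hQ0
    have ne8 : Pf Q (n-i-l) ≠ 0 := ne_of_gt pnil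
    have ne9 : Pf Q (k-i) ≠ 0 := ne_of_gt pki
    have ne10 : Pf Q (n-i-k) ≠ 0 := ne_of_gt pnik
    field_simp
    ring
  -- bound T2
  have hDEN2pos : (0:ℝ) < ((Pf Q (l-i) * Pf Q (l-i)) * (Pf Q (n-k-l) * Pf Q (n-k-l)) * (Pf Q (k-i) * Pf Q (n-i-k)) * Pf Q (n-2*i) * Q^(2*(k*l)) * (Pf Q l * Pf Q l) * (Pf Q (n-1-l) * Pf Q (n-1-l)) * (Pf Q (n-k) * Pf Q (n-k))) := by
    refine mul_pos (mul_pos (mul_pos (mul_pos (mul_pos (mul_pos (mul_pos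
      (mul_pos pli pli) (mul_pos pnkl pnkl)) (mul_pos pki pnik)) pn2i)
      (pow_pos hQ0 _)) (mul_pos pl pl)) (mul_pos pn1l pn1l)) (mul_pos pnk pnk)
  have hT2le : (theta Q n i k l * bF Q n k l 0)^2 ≤ (1/48) * ((u*u)*(v*v)) := by
    rw [hT2eq, hu2, hv2]
    rw [show (1/48) * ((Pf Q (n-1) / (Pf Q (k-1) * Pf Q (n-k))) * (Pf Q (n-1) / (Pf Q (l-1) * Pf Q (n-l))))
        = (Pf Q (n-1) * Pf Q (n-1)) / (48 * (Pf Q (k-1) * Pf Q (n-k) * (Pf Q (l-1) * Pf Q (n-l)))) by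
      field_simp]
    rw [div_le_div_iff₀ hDEN2pos (by
      have := mul_pos (mul_pos pk1 pnk) (mul_pos pl1 pnl)
      linarith only [this])]
    have hK2 := K2 hq2 n k l i M hi2 hil hlk hkn hMeq
    calc (Q^(M+2*l) * (1/4) * (Pf Q (n-k-i) * Pf Q (n-k-i)) * Pf Q (n-2*i) * (Pf Q (l-i) * Pf Q (n-i-l)) * (Pf Q (n-1) * Pf Q (n-1)) * (Pf Q l * Pf Q l) * (Pf Q (n-k-l) * Pf Q (n-k-l))) * (48 * (Pf Q (k-1) * Pf Q (n-k) * (Pf Q (l-1) * Pf Q (n-l))))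
        = (Q^(M+2*l) * (Pf Q (n-k-i) * Pf Q (n-k-i) * Pf Q (k-1) * Pf Q (l-1) * Pf Q (n-l) * Pf Q (n-i-l)))
          * (12 * (Pf Q (n-2*i) * Pf Q (l-i) * (Pf Q (n-1) * Pf Q (n-1)) * (Pf Q l * Pf Q l)
            * (Pf Q (n-k-l) * Pf Q (n-k-l)) * Pf Q (n-k))) := by ring
      _ ≤ ((1/12) * (Q^(2*(k*l)) * (Pf Q (n-k) * Pf Q (l-i) * Pf Q (k-i) * Pf Q (n-i-k)
            * (Pf Q (n-1-l) * Pf Q (n-1-l)))))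
          * (12 * (Pf Q (n-2*i) * Pf Q (l-i) * (Pf Q (n-1) * Pf Q (n-1)) * (Pf Q l * Pf Q l)
            * (Pf Q (n-k-l) * Pf Q (n-k-l)) * Pf Q (n-k))) := by
          refine mul_le_mul_of_nonneg_right hK2 ?_
          have h12 := mul_pos (mul_pos (mul_pos (mul_pos (mul_pos pn2i pli)
            (mul_pos pn1 pn1)) (mul_pos pl pl)) (mul_pos pnkl pnkl)) pnk
          linarith only [h12]
      _ = (Pf Q (n-1) * Pf Q (n-1)) * ((Pf Q (l-i) * Pf Q (l-i)) * (Pf Q (n-k-l) * Pf Q (n-k-l)) * (Pf Q (k-i) * Pf Q (n-i-k)) * Pf Q (n-2*i) * Q^(2*(k*l)) * (Pf Q l * Pf Q l) * (Pf Q (n-1-l) * Pf Q (n-1-l)) * (Pf Q (n-k) * Pf Q (n-k))) := by ring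
  -- conclusion
  rw [hC1eq]
  have huv2 : (0:ℝ) < (u*v)*(u*v) := mul_pos (mul_pos hu0 hv0) (mul_pos hu0 hv0)
  have hprod : (Q^(k*k+j) * (Pf Q (n-k-i) * Pf Q k) * ((1/2) * Q^l * (Q^((k:ℤ)-(l:ℤ)) - 1)) * Pf Q (n-2*k)) / ((Q^(i*k) * Q^(k^2) * (Q^k - 1)) * ((Pf Q (k-i) * Pf Q (n-k)) * Pf Q (n-2*k))) * ((u*v)*(u*v)) ≤ (1/16) * ((u*v)*(u*v)) :=
    mul_le_mul_of_nonneg_right hR1le (le_of_lt huv2)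
  have hT2le' : (theta Q n i k l * bF Q n k l 0)^2 ≤ (1/48) * ((u*v)*(u*v)) := by
    calc (theta Q n i k l * bF Q n k l 0)^2 ≤ (1/48) * ((u*u)*(v*v)) := hT2le
    _ = (1/48) * ((u*v)*(u*v)) := by ring
  rcases Nat.even_or_odd i with he | ho
  · rw [Even.neg_one_pow he]
    nlinarith only [hprod, hT2le', huv2, hR1nn, hR1le]
  · rw [Odd.neg_one_pow ho]
    nlinarith only [hprod, hT2le', huv2, hR1nn, hR1le]
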